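/- Consider the weighted projective plane ℙ(1,1,2) with coordinates (y₀:y₁:y₂). The map ψ : ℙ(1,1,2) ∖ {(y₀:0:y₂)} → Heck₅/G given by (y₀:y₁:y₂) ↦ [(y₁²z, y₀y₁ + y₂z²)] is well-defined (independent of representative) and injective, and the complement of its domain is the closed subset {y₁ = 0} ≅ ℙ(1,2). -/

import Mathlib

noncomputable section

/-- Truncated multiplication (convolution) of power-series jets. -/
def conv (φ a : ℕ → ℂ) (k : ℕ) : ℂ := ∑ i ∈ Finset.range (k + 1), φ i * a (k - i)

/-- The space `Heck_d` of Hecke parameters at a zero of odd order `d`: pairs `(a,b)` of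
power-series jets with `a` odd, `b` even (under `z ↦ -z`), of vanishing order
`≤ (d-1)/2`. -/
abbrev HeckCar (d : ℕ) : Type :=
  {x : (ℕ → ℂ) × (ℕ → ℂ) //
    (∀ i, Even i → x.1 i = 0) ∧ (∀ i, ¬ Even i → x.2 i = 0) ∧
    ∃ i, i ≤ (d - 1) / 2 ∧ (x.1 i ≠ 0 ∨ x.2 i ≠ 0)}

/-- The identification on `Heck_d`: the action of the group `G` of even truncated units
combined with the truncation relation. -/
def HeckRel (d : ℕ) (x y : HeckCar d) : Prop :=
  ∃ (n : ℕ) (φ : ℕ → ℂ), n ≤ (d - 1) / 2 ∧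
    (∀ i < n, x.val.1 i = 0 ∧ x.val.2 i = 0) ∧ (x.val.1 n ≠ 0 ∨ x.val.2 n ≠ 0) ∧
    φ 0 ≠ 0 ∧ (∀ i, ¬ Even i → φ i = 0) ∧
    ∀ k < d - n, conv φ x.val.1 k = y.val.1 k ∧ conv φ x.val.2 k = y.val.2 k

/-- The weighted projective plane `ℙ(1,1,2)` as a quotient of `ℂ³ ∖ {0}` by the action
`λ·(y₀,y₁,y₂) = (λy₀, λy₁, λ²y₂)`. -/
def W112Rel (x y : {v : Fin 3 → ℂ // v ≠ 0}) : Prop :=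
  ∃ c : ℂˣ, y.val 0 = (c : ℂ) * x.val 0 ∧ y.val 1 = (c : ℂ) * x.val 1 ∧
    y.val 2 = (c : ℂ) ^ 2 * x.val 2

/-- The weighted projective line `ℙ(1,2)` as a quotient of `ℂ² ∖ {0}`. -/
def W12Rel (x y : {v : Fin 2 → ℂ // v ≠ 0}) : Prop :=
  ∃ c : ℂˣ, y.val 0 = (c : ℂ) * x.val 0 ∧ y.val 1 = (c : ℂ) ^ 2 * x.val 1

/-- The Hecke parameter `(y₁²·z, y₀y₁ + y₂·z²) ∈ Heck₅` associated to
`(y₀ : y₁ : y₂) ∈ ℙ(1,1,2)` with `y₁ ≠ 0`. -/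
def FHeck (v : Fin 3 → ℂ) (hv : v 1 ≠ 0) : HeckCar 5 :=
  ⟨((fun i => if i = 1 then (v 1) ^ 2 else 0),
    (fun i => if i = 0 then v 0 * v 1 else if i = 2 then v 2 else 0)),
    by
      refine ⟨fun i hi => ?_, fun i hi => ?_, 1, by norm_num, Or.inl ?_⟩
      · have h1 : i ≠ 1 := by rintro rfl; simp at hi
        simp [h1]
      · have h0 : i ≠ 0 := by rintro rfl; exact hi (by decide)
        have h2 : i ≠ 2 := by rintro rfl; exact hi (by decide)
        simp [h0, h2]
      · simpa using pow_ne_zero 2 hv⟩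

open Classical

/-- A full invariant of `Heck₅/G`, sufficient to separate points in the image of `ψ`. -/
def FInv (x : HeckCar 5) : ℕ × ℂ × ℂ :=
  if x.val.2 0 ≠ 0 then
    (0, x.val.1 1 / x.val.2 0,
      (x.val.1 3 * x.val.2 0 - x.val.1 1 * x.val.2 2) / (x.val.2 0) ^ 2)
  else if x.val.1 1 ≠ 0 then (1, x.val.2 2 / x.val.1 1, 0)
  else (2, 0, 0)

lemma conv_const (t : ℂ) (a : ℕ → ℂ) (k : ℕ) :
    conv (fun i => if i = 0 then t else 0) a k = t * a k := by
  rw [conv, Finset.sum_eq_single 0]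
  · simp
  · intro i _ hi; simp [hi]
  · intro h; simp at h

lemma FHeck_a1 {v : Fin 3 → ℂ} (hv1 : v 1 ≠ 0) : (FHeck v hv1).val.1 1 = (v 1) ^ 2 := by
  norm_num [FHeck]
lemma FHeck_a3 {v : Fin 3 → ℂ} (hv1 : v 1 ≠ 0) : (FHeck v hv1).val.1 3 = 0 := by
  norm_num [FHeck]
lemma FHeck_b0 {v : Fin 3 → ℂ} (hv1 : v 1 ≠ 0) : (FHeck v hv1).val.2 0 = v 0 * v 1 := by
  norm_num [FHeck]
lemma FHeck_b2 {v : Fin 3 → ℂ} (hv1 : v 1 ≠ 0) : (FHeck v hv1).val.2 2 = v 2 := by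
  norm_num [FHeck]

lemma FInv_invariant {x y : HeckCar 5} (h : HeckRel 5 x y) : FInv x = FInv y := by
  obtain ⟨n, φ, hn, hlow, hnz, hφ0, hφodd, hk⟩ := h
  have hn2 : n ≤ 2 := by omega
  have hφ1 : φ 1 = 0 := hφodd 1 (by decide)
  have hφ3 : φ 3 = 0 := hφodd 3 (by decide)
  have ha0 : x.val.1 0 = 0 := x.prop.1 0 Even.zero
  have ha2 : x.val.1 2 = 0 := x.prop.1 2 (by decide)
  have hb1 : x.val.2 1 = 0 := x.prop.2.1 1 (by decide)
  have e0 : y.val.2 0 = φ 0 * x.val.2 0 := by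
    have := (hk 0 (by omega)).2
    rw [← this, conv]; simp
  have e1 : y.val.1 1 = φ 0 * x.val.1 1 := by
    have := (hk 1 (by omega)).1
    rw [← this, conv, Finset.sum_range_succ, Finset.sum_range_succ]
    simp [hφ1]
  have e2 : y.val.2 2 = φ 0 * x.val.2 2 + φ 2 * x.val.2 0 := by
    have := (hk 2 (by omega)).2
    rw [← this, conv, Finset.sum_range_succ, Finset.sum_range_succ, Finset.sum_range_succ]
    simp [hφ1, hb1]
  by_cases hb0 : x.val.2 0 ≠ 0
  · have hn0 : n = 0 := by
      by_contra hne
      exact hb0 (hlow 0 (by omega)).2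
    have e3 : y.val.1 3 = φ 0 * x.val.1 3 + φ 2 * x.val.1 1 := by
      have := (hk 3 (by omega)).1
      rw [← this, conv, Finset.sum_range_succ, Finset.sum_range_succ, Finset.sum_range_succ,
        Finset.sum_range_succ]
      simp [hφ1, hφ3, ha0, ha2]
    have hb0' : y.val.2 0 ≠ 0 := by rw [e0]; exact mul_ne_zero hφ0 hb0
    rw [FInv, FInv, if_pos hb0, if_pos hb0', e0, e1, e2, e3]
    simp only [Prod.mk.injEq, true_and]
    constructor
    · rw [mul_div_mul_left _ _ hφ0]
    · field_simp
      ring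
  · push_neg at hb0
    have hb0' : y.val.2 0 = 0 := by rw [e0, hb0, mul_zero]
    by_cases ha1 : x.val.1 1 ≠ 0
    · have ha1' : y.val.1 1 ≠ 0 := by rw [e1]; exact mul_ne_zero hφ0 ha1
      rw [FInv, FInv, if_neg (by simpa using hb0), if_pos ha1,
        if_neg (by simpa using hb0'), if_pos ha1', e1, e2, hb0, mul_zero, add_zero]
      simp only [Prod.mk.injEq, true_and, and_true]
      rw [mul_div_mul_left _ _ hφ0]
    · push_neg at ha1
      have ha1' : y.val.1 1 = 0 := by rw [e1, ha1, mul_zero]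
      rw [FInv, FInv, if_neg (by simpa using hb0), if_neg (by simpa using ha1),
        if_neg (by simpa using hb0'), if_neg (by simpa using ha1')]

lemma FInv_of_quot_eq {x y : HeckCar 5}
    (h : Quot.mk (HeckRel 5) x = Quot.mk (HeckRel 5) y) : FInv x = FInv y :=
  congrArg (Quot.lift FInv fun _ _ hab => FInv_invariant hab) h

lemma FInv_FHeck_ne {v : Fin 3 → ℂ} (hv1 : v 1 ≠ 0) (hv0 : v 0 ≠ 0) :
    FInv (FHeck v hv1) = (0, v 1 / v 0, -(v 2 / (v 0) ^ 2)) := by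
  have hb0 : (FHeck v hv1).val.2 0 ≠ 0 := by
    rw [FHeck_b0]; exact mul_ne_zero hv0 hv1
  rw [FInv, if_pos hb0, FHeck_a1, FHeck_a3, FHeck_b0, FHeck_b2]
  simp only [Prod.mk.injEq, true_and]
  constructor
  · field_simp
  · field_simp; ring

lemma FInv_FHeck_zero {v : Fin 3 → ℂ} (hv1 : v 1 ≠ 0) (hv0 : v 0 = 0) :
    FInv (FHeck v hv1) = (1, v 2 / (v 1) ^ 2, 0) := by
  have hb0 : ¬ (FHeck v hv1).val.2 0 ≠ 0 := by
    rw [FHeck_b0, hv0, zero_mul]; simp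
  have ha1 : (FHeck v hv1).val.1 1 ≠ 0 := by
    rw [FHeck_a1]; exact pow_ne_zero 2 hv1
  rw [FInv, if_neg hb0, if_pos ha1, FHeck_a1, FHeck_b2]

lemma w112_equiv : Equivalence W112Rel := by
  constructor
  · intro x; exact ⟨1, by simp⟩
  · rintro x y ⟨c, h0, h1, h2⟩
    refine ⟨c⁻¹, ?_, ?_, ?_⟩ <;>
      rw [Units.val_inv_eq_inv_val] <;>
      [rw [h0]; rw [h1]; rw [h2]] <;>
      field_simp
  · rintro x y z ⟨c, h0, h1, h2⟩ ⟨d, g0, g1, g2⟩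
    exact ⟨d * c, by rw [g0, h0, Units.val_mul]; ring, by rw [g1, h1, Units.val_mul]; ring,
      by rw [g2, h2, Units.val_mul]; ring⟩

lemma w112_of_quot_eq {x y : {v : Fin 3 → ℂ // v ≠ 0}}
    (h : Quot.mk W112Rel x = Quot.mk W112Rel y) : W112Rel x y :=
  (w112_equiv.eqvGen_iff).mp (Quot.eqvGen_exact h)

/-- The inclusion `ℂ² ∖ {0} → ℂ³ ∖ {0}`, `(w₀,w₁) ↦ (w₀,0,w₁)`. -/
def emb3 (v : Fin 2 → ℂ) : Fin 3 → ℂ := ![v 0, 0, v 1]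

lemma emb3_zero (v : Fin 2 → ℂ) : emb3 v 0 = v 0 := rfl
lemma emb3_one (v : Fin 2 → ℂ) : emb3 v 1 = 0 := rfl
lemma emb3_two (v : Fin 2 → ℂ) : emb3 v 2 = v 1 := rfl

lemma emb3_ne {v : Fin 2 → ℂ} (hv : v ≠ 0) : emb3 v ≠ 0 := by
  intro h
  apply hv
  funext i
  fin_cases i
  · exact congrFun h 0
  · exact congrFun h 2

/-- The natural map `ℙ(1,2) ∖ {0} → {y₁ = 0} ⊂ ℙ(1,1,2)` on the level of representatives. -/
def Gmap : {v : Fin 2 → ℂ // v ≠ 0} →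
    {q : Quot W112Rel | ∃ x : {v : Fin 3 → ℂ // v ≠ 0},
      Quot.mk W112Rel x = q ∧ x.val 1 = 0} :=
  fun w => ⟨Quot.mk W112Rel ⟨emb3 w.val, emb3_ne w.prop⟩,
    ⟨emb3 w.val, emb3_ne w.prop⟩, rfl, rfl⟩

lemma Gmap_sound : ∀ a b, W12Rel a b → Gmap a = Gmap b := by
  rintro a b ⟨c, h0, h1⟩
  apply Subtype.ext
  apply Quot.sound
  exact ⟨c, h0, (mul_zero (c:ℂ)).symm, h1⟩

/-- The map `ψ : ℙ(1,1,2) ∖ {(y₀:0:y₂)} → Heck₅/G`,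
`(y₀:y₁:y₂) ↦ [(y₁²z, y₀y₁ + y₂z²)]`, is well-defined (independent of the chosen
representative) and injective, and the complement of its domain is the closed subset
`{y₁ = 0}`, which is isomorphic to `ℙ(1,2)`. -/
theorem stmt14 :
    (∀ (v u : Fin 3 → ℂ) (hv : v ≠ 0) (hv1 : v 1 ≠ 0) (hu : u ≠ 0) (hu1 : u 1 ≠ 0),
      W112Rel ⟨v, hv⟩ ⟨u, hu⟩ →
        Quot.mk (HeckRel 5) (FHeck v hv1) = Quot.mk (HeckRel 5) (FHeck u hu1)) ∧
    (∀ (v u : Fin 3 → ℂ) (hv : v ≠ 0) (hv1 : v 1 ≠ 0) (hu : u ≠ 0) (hu1 : u 1 ≠ 0),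
      Quot.mk (HeckRel 5) (FHeck v hv1) = Quot.mk (HeckRel 5) (FHeck u hu1) →
        Quot.mk W112Rel ⟨v, hv⟩ = Quot.mk W112Rel ⟨u, hu⟩) ∧
    IsClosed {q : Quot W112Rel | ∃ x : {v : Fin 3 → ℂ // v ≠ 0},
      Quot.mk W112Rel x = q ∧ x.val 1 = 0} ∧
    Nonempty ({q : Quot W112Rel | ∃ x : {v : Fin 3 → ℂ // v ≠ 0},
      Quot.mk W112Rel x = q ∧ x.val 1 = 0} ≃ Quot W12Rel) := by
  refine ⟨?_, ?_, ?_, ?_⟩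
  · -- well-definedness
    rintro v u hv hv1 hu hu1 ⟨c, h0, h1, h2⟩
    replace h0 : u 0 = (c:ℂ) * v 0 := h0
    replace h1 : u 1 = (c:ℂ) * v 1 := h1
    replace h2 : u 2 = (c:ℂ)^2 * v 2 := h2
    apply Quot.sound
    have hφ0 : (fun i => if i = 0 then (c:ℂ)^2 else 0) 0 ≠ 0 := by
      simp
    have hφodd : ∀ i, ¬ Even i → (fun i => if i = 0 then (c:ℂ)^2 else 0) i = 0 := by
      intro i hi
      have : i ≠ 0 := by rintro rfl; exact hi Even.zero
      simp [this]
    have hk : ∀ k, conv (fun i => if i = 0 then (c:ℂ)^2 else 0) (FHeck v hv1).val.1 k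
          = (FHeck u hu1).val.1 k ∧
        conv (fun i => if i = 0 then (c:ℂ)^2 else 0) (FHeck v hv1).val.2 k
          = (FHeck u hu1).val.2 k := by
      intro k
      constructor
      · rw [conv_const]
        show (c:ℂ)^2 * (if k = 1 then (v 1)^2 else 0) = (if k = 1 then (u 1)^2 else 0)
        split
        · rw [h1]; ring
        · ring
      · rw [conv_const]
        show (c:ℂ)^2 * (if k = 0 then v 0 * v 1 else if k = 2 then v 2 else 0)
            = (if k = 0 then u 0 * u 1 else if k = 2 then u 2 else 0)
        split
        · rw [h0, h1]; ring
        · split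
          · rw [h2]
          · ring
    by_cases hv0 : v 0 = 0
    · refine ⟨1, fun i => if i = 0 then (c:ℂ)^2 else 0, by norm_num, ?_, ?_, hφ0, hφodd,
        fun k _ => hk k⟩
      · intro i hi
        have hi0 : i = 0 := by omega
        subst hi0
        constructor
        · show (if (0:ℕ) = 1 then (v 1)^2 else 0) = 0
          norm_num
        · show (if (0:ℕ) = 0 then v 0 * v 1 else if (0:ℕ) = 2 then v 2 else 0) = 0
          simp [hv0]
      · left
        rw [FHeck_a1]
        exact pow_ne_zero 2 hv1
    · refine ⟨0, fun i => if i = 0 then (c:ℂ)^2 else 0, by norm_num,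
        fun i hi => absurd hi (Nat.not_lt_zero i), ?_, hφ0, hφodd, fun k _ => hk k⟩
      right
      rw [FHeck_b0]
      exact mul_ne_zero hv0 hv1
  · -- injectivity
    rintro v u hv hv1 hu hu1 h
    have hF := FInv_of_quot_eq h
    apply Quot.sound
    by_cases hv0 : v 0 = 0
    · by_cases hu0 : u 0 = 0
      · rw [FInv_FHeck_zero hv1 hv0, FInv_FHeck_zero hu1 hu0] at hF
        simp only [Prod.mk.injEq, true_and, and_true] at hF
        refine ⟨Units.mk0 (u 1 / v 1) (div_ne_zero hu1 hv1), ?_, ?_, ?_⟩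
        · show u 0 = _ * v 0
          rw [Units.val_mk0, hv0, hu0, mul_zero]
        · show u 1 = _ * v 1
          rw [Units.val_mk0]
          field_simp
        · show u 2 = _ ^ 2 * v 2
          rw [Units.val_mk0]
          field_simp at hF ⊢
          linear_combination -hF
      · rw [FInv_FHeck_zero hv1 hv0, FInv_FHeck_ne hu1 hu0] at hF
        exact absurd (congrArg Prod.fst hF) (by norm_num)
    · by_cases hu0 : u 0 = 0
      · rw [FInv_FHeck_ne hv1 hv0, FInv_FHeck_zero hu1 hu0] at hF
        exact absurd (congrArg Prod.fst hF) (by norm_num)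
      · rw [FInv_FHeck_ne hv1 hv0, FInv_FHeck_ne hu1 hu0] at hF
        simp only [Prod.mk.injEq, true_and, neg_inj] at hF
        obtain ⟨hr1, hr2⟩ := hF
        refine ⟨Units.mk0 (u 0 / v 0) (div_ne_zero hu0 hv0), ?_, ?_, ?_⟩
        · show u 0 = _ * v 0
          rw [Units.val_mk0]
          field_simp
        · show u 1 = _ * v 1
          rw [Units.val_mk0]
          field_simp at hr1 ⊢
          linear_combination -hr1
        · show u 2 = _ ^ 2 * v 2
          rw [Units.val_mk0]
          field_simp at hr2 ⊢
          linear_combination -hr2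
  · -- closedness
    rw [← (isQuotientMap_quot_mk (r := W112Rel)).isClosed_preimage]
    have hset : Quot.mk W112Rel ⁻¹' {q | ∃ x : {v : Fin 3 → ℂ // v ≠ 0},
          Quot.mk W112Rel x = q ∧ x.val 1 = 0}
        = {x : {v : Fin 3 → ℂ // v ≠ 0} | x.val 1 = 0} := by
      ext x
      simp only [Set.mem_preimage, Set.mem_setOf_eq]
      constructor
      · rintro ⟨y, hy, hy1⟩
        obtain ⟨c, h0, h1, h2⟩ := w112_of_quot_eq hy
        rw [h1, hy1, mul_zero]
      · intro h
        exact ⟨x, rfl, h⟩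
    rw [hset]
    exact isClosed_eq ((continuous_apply (1 : Fin 3)).comp continuous_subtype_val)
      continuous_const
  · -- the isomorphism with ℙ(1,2)
    refine ⟨(Equiv.ofBijective (Quot.lift Gmap Gmap_sound) ⟨?_, ?_⟩).symm⟩
    · intro q q'
      induction q using Quot.ind with | _ a => ?_
      induction q' using Quot.ind with | _ b => ?_
      intro h
      have h' : Quot.mk W112Rel ⟨emb3 a.val, emb3_ne a.prop⟩
          = Quot.mk W112Rel ⟨emb3 b.val, emb3_ne b.prop⟩ := congrArg Subtype.val h
      obtain ⟨c, h0, h1, h2⟩ := w112_of_quot_eq h'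
      apply Quot.sound
      exact ⟨c, h0, h2⟩
    · rintro ⟨q, x, hx, hx1⟩
      have hne : (![x.val 0, x.val 2] : Fin 2 → ℂ) ≠ 0 := by
        intro h
        apply x.prop
        funext i
        fin_cases i
        · exact congrFun h 0
        · exact hx1
        · exact congrFun h 1
      refine ⟨Quot.mk W12Rel ⟨![x.val 0, x.val 2], hne⟩, ?_⟩
      apply Subtype.ext
      show Quot.mk W112Rel ⟨emb3 ![x.val 0, x.val 2], _⟩ = q
      rw [← hx]
      apply Quot.sound
      refine ⟨1, ?_, ?_, ?_⟩
      · show x.val 0 = (1:ℂˣ) * x.val 0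
        simp
      · show x.val 1 = (1:ℂˣ) * (0:ℂ)
        simp [hx1]
      · show x.val 2 = ((1:ℂˣ):ℂ)^2 * x.val 2
        simp
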